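/- Let V be a real normed vector space, U ⊆ V a nonempty open connected set, Λ ∈ ℂ, and let q, p : V → ℂ be differentiable at every point of U, with q x ≠ 0, p x ≠ 0 and q x · p x + Λ ≠ 0 for all x ∈ U. Then the following are equivalent: (a) for every x ∈ U, (4·(q x)·(p x) − 2·Λ)·(p x) • fderiv ℝ q x + ((q x)·(p x) − 5·Λ)·(q x) • fderiv ℝ p x = 0 (an identity of continuous ℝ-linear maps V → ℂ); (b) there exists μ ∈ ℂ with μ ≠ 0 such that for every x ∈ U, ((q x)·(p x) + Λ)⁶ = μ · (q x)² · (p x)⁵. -/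

import Mathlib

open Metric

theorem stmt_9 {V : Type*} [NormedAddCommGroup V] [NormedSpace ℝ V]
    (U : Set V) (hU : U.Nonempty) (hUo : IsOpen U) (hUc : IsConnected U)
    (Λ : ℂ) (q p : V → ℂ)
    (hq : ∀ x ∈ U, DifferentiableAt ℝ q x) (hp : ∀ x ∈ U, DifferentiableAt ℝ p x)
    (hq0 : ∀ x ∈ U, q x ≠ 0) (hp0 : ∀ x ∈ U, p x ≠ 0)
    (hqp : ∀ x ∈ U, q x * p x + Λ ≠ 0) :
    (∀ x ∈ U,
        ((4 * q x * p x - 2 * Λ) * p x) • fderiv ℝ q x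
          + ((q x * p x - 5 * Λ) * q x) • fderiv ℝ p x = 0)
      ↔ (∃ μ : ℂ, μ ≠ 0 ∧ ∀ x ∈ U,
          (q x * p x + Λ) ^ 6 = μ * (q x) ^ 2 * (p x) ^ 5) := by
  set H : V → ℂ := fun y => (q y * p y + Λ) ^ 6 * ((q y) ^ 2 * (p y) ^ 5)⁻¹ with hHdef
  -- key derivative computation
  have key : ∀ x ∈ U, HasFDerivAt H
      (((q x * p x + Λ) ^ 5 * ((q x) ^ 3 * (p x) ^ 6)⁻¹) •
        (((4 * q x * p x - 2 * Λ) * p x) • fderiv ℝ q x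
          + ((q x * p x - 5 * Λ) * q x) • fderiv ℝ p x)) x := by
    intro x hx
    have hqx := (hq x hx).hasFDerivAt
    have hpx := (hp x hx).hasFDerivAt
    have ha := hq0 x hx
    have hb := hp0 x hx
    have hab := hqp x hx
    have hm := hqx.mul hpx
    have hmΛ := hm.add_const Λ
    have hA := (((hasDerivAt_pow 6 (q x * p x + Λ)).hasFDerivAt).restrictScalars ℝ).comp x hmΛ
    have hq2 := (((hasDerivAt_pow 2 (q x)).hasFDerivAt).restrictScalars ℝ).comp x hqx
    have hp5 := (((hasDerivAt_pow 5 (p x)).hasFDerivAt).restrictScalars ℝ).comp x hpx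
    have hC := hq2.mul hp5
    have hC0 : (q x) ^ 2 * (p x) ^ 5 ≠ 0 := mul_ne_zero (pow_ne_zero _ ha) (pow_ne_zero _ hb)
    have hB := ((hasFDerivAt_inv hC0).restrictScalars ℝ).comp x hC
    have hH := hA.mul hB
    convert hH using 1
    · rfl
    · rfl
    ext v
    simp only [ContinuousLinearMap.add_apply, ContinuousLinearMap.coe_smul',
      Pi.smul_apply, ContinuousLinearMap.coe_comp', Function.comp_apply,
      ContinuousLinearMap.coe_restrictScalars', ContinuousLinearMap.smulRight_apply,
      ContinuousLinearMap.one_apply, smul_eq_mul, ContinuousLinearMap.toSpanSingleton_apply, Pi.mul_apply]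
    field_simp
    ring
  constructor
  · intro hA
    obtain ⟨x₀, hx₀⟩ := hU
    -- H has zero derivative on U
    have hzero : ∀ x ∈ U, HasFDerivAt H (0 : V →L[ℝ] ℂ) x := by
      intro x hx
      have h2 := key x hx
      rw [hA x hx] at h2
      convert h2 using 1
      ext v
      simp
    -- local constancy
    have loc : ∀ x ∈ U, ∃ r > 0, ball x r ⊆ U ∧ ∀ z ∈ ball x r, H z = H x := by
      intro x hx
      obtain ⟨r, hr, hball⟩ := Metric.isOpen_iff.1 hUo x hx
      refine ⟨r, hr, hball, fun z hz => ?_⟩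
      have hconv : Convex ℝ (ball x r) := convex_ball x r
      refine hconv.is_const_of_fderivWithin_eq_zero
        (fun y hy => ((hzero y (hball hy)).differentiableAt).differentiableWithinAt)
        (fun y hy => ?_) hz (mem_ball_self hr)
      rw [fderivWithin_of_isOpen isOpen_ball hy, (hzero y (hball hy)).fderiv]
    -- clopen argument
    set S : Set V := {x | x ∈ U ∧ H x = H x₀} with hSdef
    set T : Set V := {x | x ∈ U ∧ H x ≠ H x₀} with hTdef
    have hSopen : IsOpen S := by
      rw [Metric.isOpen_iff]
      rintro x ⟨hxU, hxH⟩
      obtain ⟨r, hr, hball, hc⟩ := loc x hxU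
      exact ⟨r, hr, fun z hz => ⟨hball hz, (hc z hz).trans hxH⟩⟩
    have hTopen : IsOpen T := by
      rw [Metric.isOpen_iff]
      rintro x ⟨hxU, hxH⟩
      obtain ⟨r, hr, hball, hc⟩ := loc x hxU
      exact ⟨r, hr, fun z hz => ⟨hball hz, (hc z hz).symm ▸ hxH⟩⟩
    have hcover : U ⊆ S ∪ T := by
      intro x hx
      by_cases h : H x = H x₀
      · exact Or.inl ⟨hx, h⟩
      · exact Or.inr ⟨hx, h⟩
    have hconst : ∀ x ∈ U, H x = H x₀ := by
      intro x hx
      by_contra hne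
      have hST := hUc.isPreconnected S T hSopen hTopen hcover
        ⟨x₀, hx₀, hx₀, rfl⟩ ⟨x, hx, hx, hne⟩
      obtain ⟨y, _, ⟨_, hy1⟩, ⟨_, hy2⟩⟩ := hST
      exact hy2 hy1
    refine ⟨H x₀, ?_, fun x hx => ?_⟩
    · exact mul_ne_zero (pow_ne_zero _ (hqp x₀ hx₀))
        (inv_ne_zero (mul_ne_zero (pow_ne_zero _ (hq0 x₀ hx₀)) (pow_ne_zero _ (hp0 x₀ hx₀))))
    · have h := hconst x hx
      simp only [hHdef] at h
      have hC0 : (q x) ^ 2 * (p x) ^ 5 ≠ 0 :=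
        mul_ne_zero (pow_ne_zero _ (hq0 x hx)) (pow_ne_zero _ (hp0 x hx))
      field_simp at h
      rw [div_eq_iff hC0] at h
      rw [h, hHdef]; ring
  · rintro ⟨μ, hμ, hid⟩ x hx
    -- H is eventually constant μ near x
    have hev : H =ᶠ[nhds x] fun _ => μ := by
      filter_upwards [hUo.mem_nhds hx] with y hy
      have hC0 : (q y) ^ 2 * (p y) ^ 5 ≠ 0 :=
        mul_ne_zero (pow_ne_zero _ (hq0 y hy)) (pow_ne_zero _ (hp0 y hy))
      simp only [hHdef]
      rw [hid y hy]
      field_simp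
      exact div_self (mul_ne_zero (hq0 y hy) (hp0 y hy))
    have h0 : HasFDerivAt H (0 : V →L[ℝ] ℂ) x := (hasFDerivAt_const μ x).congr_of_eventuallyEq hev
    have heq := (key x hx).unique h0
    have hc : (q x * p x + Λ) ^ 5 * ((q x) ^ 3 * (p x) ^ 6)⁻¹ ≠ 0 :=
      mul_ne_zero (pow_ne_zero _ (hqp x hx))
        (inv_ne_zero (mul_ne_zero (pow_ne_zero _ (hq0 x hx)) (pow_ne_zero _ (hp0 x hx))))
    rcases (smul_eq_zero (R := ℂ) (M := V →L[ℝ] ℂ)).mp heq with h | h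
    · exact absurd h hc
    · exact h
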